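/- Let v, u, u' be three distinct points in the plane, each pair among (v,u) and (v,u') and (u,u') relevant within distance r. Then u ⪯_v u' if and only if v ⪯_u u', where ⪯ is the arc-containment relation on disk boundaries. -/
import Mathlib


open Metric

noncomputable section

/-- Points of the plane. -/
abbrev Pt := EuclideanSpace ℝ (Fin 2)

/-- `Zd r p` : the closed disk (communication zone) of radius `r` centered at `p`. -/
def Zd (r : ℝ) (p : Pt) : Set Pt := Metric.closedBall p r

/-- `Zb r p` : the boundary circle of the communication zone of `p`. -/
def Zb (r : ℝ) (p : Pt) : Set Pt := Metric.sphere p r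

/-- The arc-containment relation `a ⪯_v b`. -/
def arcLe (r : ℝ) (v a b : Pt) : Prop := Zd r a ∩ Zb r v ⊆ Zd r b ∩ Zb r v

/-- `u` is a neighbor of `v`. -/
def Nbr (r : ℝ) (v u : Pt) : Prop := u ≠ v ∧ dist u v ≤ r

/-- General position: no three distinct points of `V` are collinear. -/
def GenPos (V : Set Pt) : Prop :=
  ∀ a ∈ V, ∀ b ∈ V, ∀ c ∈ V, a ≠ b → a ≠ c → b ≠ c → ¬ Collinear ℝ ({a, b, c} : Set Pt)

/-- `u` is a maximal neighbor of `v` within `V`. -/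
def MaxNbr (V : Set Pt) (r : ℝ) (v u : Pt) : Prop :=
  u ∈ V ∧ Nbr r v u ∧ ∀ u' ∈ V, u' ≠ u → Nbr r v u' → ¬ arcLe r v u u'

/-- `v` is an interior node of `V`. -/
def IsInterior (V : Set Pt) (r : ℝ) (v : Pt) : Prop :=
  ∀ z ∈ Zb r v, ∃ v' ∈ V, v' ≠ v ∧ z ∈ Zd r v'

/-- Counterclockwise rotation by `π/2`. -/
def rot90 (x : Pt) : Pt := (WithLp.equiv 2 (Fin 2 → ℝ)).symm ![-(x 1), x 0]

/-- The boundary intersection `CCW(v, v')` of the circles `∂Z(v)` and `∂Z(v')`: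
traversing from `CCW(v,v')` to `CW(v,v')` clockwise along `∂Z(v)` sweeps an angle `< π`. -/
def ccwPt (r : ℝ) (v v' : Pt) : Pt :=
  midpoint ℝ v v' + (Real.sqrt (r ^ 2 - (dist v v' / 2) ^ 2) / dist v v') • rot90 (v' - v)

/-- The boundary intersection `CW(v, v')`. -/
def cwPt (r : ℝ) (v v' : Pt) : Pt :=
  midpoint ℝ v v' - (Real.sqrt (r ^ 2 - (dist v v' / 2) ^ 2) / dist v v') • rot90 (v' - v)

/-- A communication wheel of `v` with `m` rim nodes `w 0, …, w (m-1)` (indices mod `m`). -/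
def IsCommWheel (V : Set Pt) (r : ℝ) (v : Pt) (m : ℕ) (w : ZMod m → Pt) : Prop :=
  3 ≤ m ∧ Function.Injective w ∧
  (∀ i, MaxNbr V r v (w i)) ∧
  (∀ i, dist (w i) (w (i + 1)) ≤ r) ∧
  (∀ i, ccwPt r v (w i) ∈ Zd r (w (i + 1)) ∧ cwPt r v (w i) ∈ Zd r (w (i - 1)))

set_option maxHeartbeats 2000000 in
lemma core' (a0 a1 b0 b1 w0 w1 e k r : ℝ)
    (he : 0 < e) (hk : 0 ≤ k)
    (hek : k^2*e^2 = r^2 - e^2/4)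
    (he2 : a0^2+a1^2 = e^2)
    (Hp : (a0/2 - k*a1 - b0)^2 + (a1/2 + k*a0 - b1)^2 ≤ r^2)
    (Hq : (a0/2 + k*a1 - b0)^2 + (a1/2 - k*a0 - b1)^2 ≤ r^2)
    (hw : w0^2+w1^2 = r^2)
    (hwa : (w0-a0)^2+(w1-a1)^2 ≤ r^2) :
    (w0-b0)^2+(w1-b1)^2 ≤ r^2 := by
  obtain ⟨A, hA⟩ : ∃ x, x = a0*b0+a1*b1 := ⟨_, rfl⟩
  obtain ⟨M, hM⟩ : ∃ x, x = -a1*b0+a0*b1 := ⟨_, rfl⟩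
  obtain ⟨B, hB⟩ : ∃ x, x = b0^2+b1^2 := ⟨_, rfl⟩
  obtain ⟨S, hS⟩ : ∃ x, x = w0*a0+w1*a1 := ⟨_, rfl⟩
  obtain ⟨T, hT⟩ : ∃ x, x = -a1*w0+a0*w1 := ⟨_, rfl⟩
  have hp' : A + 2*(k*M) ≥ B := by
    have ep : (a0/2 - k*a1 - b0)^2 + (a1/2 + k*a0 - b1)^2 = r^2 - (A + 2*(k*M)) + B := by
      rw [hA, hM, hB]; linear_combination hek + (1/4)*he2 + k^2*he2
    linarith [ep ▸ Hp]
  have hq' : A - 2*(k*M) ≥ B := by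
    have eq' : (a0/2 + k*a1 - b0)^2 + (a1/2 - k*a0 - b1)^2 = r^2 - (A - 2*(k*M)) + B := by
      rw [hA, hM, hB]; linear_combination hek + (1/4)*he2 + k^2*he2
    linarith [eq' ▸ Hq]
  have hBpos : 0 ≤ B := by rw [hB]; positivity
  have hAB : A ≥ B := by linarith
  have hS' : S ≥ e^2/2 := by
    have ewa : (w0-a0)^2+(w1-a1)^2 = r^2 - 2*S + e^2 := by
      rw [hS]; linear_combination hw + he2
    linarith [ewa ▸ hwa]
  have hST : S^2 + T^2 = r^2*e^2 := by
    rw [hS, hT]; linear_combination (a0^2+a1^2)*hw + r^2*he2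
  have hS2 : (e^2/2)^2 ≤ S^2 := pow_le_pow_left₀ (by positivity) hS' 2
  have h4 : r^2*e^2 - (k*e^2)^2 = (e^2/2)^2 := by linear_combination -e^2*hek
  have hT2 : T^2 ≤ (k*e^2)^2 := by nlinarith [hST, hS2, h4]
  have hke : 0 ≤ k*e^2 := by positivity
  have hTlb : -(k*e^2) ≤ T := by nlinarith [hT2, sq_nonneg (T + k*e^2)]
  have hTub : T ≤ k*e^2 := by nlinarith [hT2, sq_nonneg (T - k*e^2)]
  have key : S*A + T*M ≥ e^2*(B/2) := by
    rcases le_or_gt 0 M with hM0 | hM0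
    · have h1 : (S - e^2/2)*A ≥ 0 := mul_nonneg (by linarith) (by linarith)
      have h2 : (T + k*e^2)*M ≥ 0 := mul_nonneg (by linarith) hM0
      nlinarith [hq', h1, h2]
    · have h1 : (S - e^2/2)*A ≥ 0 := mul_nonneg (by linarith) (by linarith)
      have h2 : (k*e^2 - T)*(-M) ≥ 0 := mul_nonneg (by linarith) (by linarith)
      nlinarith [hp', h1, h2]
  have hid : e^2*(w0*b0+w1*b1) = S*A + T*M := by
    rw [hS, hT, hA, hM, ← he2]; ring
  have hwb : w0*b0+w1*b1 ≥ B/2 := by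
    have he2' : 0 < e^2 := by positivity
    rw [← hid] at key
    exact le_of_mul_le_mul_left key he2'
  have egoal : (w0-b0)^2+(w1-b1)^2 = r^2 - 2*(w0*b0+w1*b1) + B := by
    rw [hB]; linear_combination hw
  linarith [egoal ▸ (le_refl ((w0-b0)^2+(w1-b1)^2)), egoal]

lemma dist_coord_le (x y : Pt) {r : ℝ} (hr : 0 ≤ r) :
    dist x y ≤ r ↔ (x 0 - y 0)^2 + (x 1 - y 1)^2 ≤ r^2 := by
  rw [EuclideanSpace.dist_eq, Fin.sum_univ_two, Real.dist_eq, Real.dist_eq,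
    sq_abs, sq_abs, Real.sqrt_le_left hr]

lemma dist_coord_eq (x y : Pt) {r : ℝ} (hr : 0 ≤ r) :
    dist x y = r ↔ (x 0 - y 0)^2 + (x 1 - y 1)^2 = r^2 := by
  rw [EuclideanSpace.dist_eq, Fin.sum_univ_two, Real.dist_eq, Real.dist_eq,
    sq_abs, sq_abs, Real.sqrt_eq_iff_eq_sq (by positivity) hr]


set_option maxHeartbeats 2000000 in
lemma half (r : ℝ) (v u u' : Pt) (hvu : v ≠ u) (h1 : dist v u ≤ r)
    (H : arcLe r v u u') : arcLe r u v u' := by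
  have hepos : 0 < dist v u := dist_pos.2 hvu
  have hr : 0 < r := lt_of_lt_of_le hepos h1
  obtain ⟨e, hedef⟩ : ∃ x, x = dist v u := ⟨_, rfl⟩
  obtain ⟨a0, ha0⟩ : ∃ x, x = v 0 - u 0 := ⟨_, rfl⟩
  obtain ⟨a1, ha1⟩ : ∃ x, x = v 1 - u 1 := ⟨_, rfl⟩
  have he : 0 < e := hedef ▸ hepos
  have h1' : e ≤ r := hedef ▸ h1
  have he2 : a0^2 + a1^2 = e^2 := by
    rw [ha0, ha1, hedef]; exact (dist_coord_eq v u (le_of_lt hepos)).1 rfl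
  have heX : (0:ℝ) ≤ r^2 - e^2/4 := by nlinarith [he.le, h1']
  obtain ⟨k, hkdef⟩ : ∃ x, x = Real.sqrt (r^2 - e^2/4) / e := ⟨_, rfl⟩
  have hk : 0 ≤ k := hkdef ▸ div_nonneg (Real.sqrt_nonneg _) he.le
  have hek : k^2*e^2 = r^2 - e^2/4 := by
    rw [hkdef, div_pow, div_mul_cancel₀ _ (by positivity : e^2 ≠ 0), Real.sq_sqrt heX]
  have hv0 : v 0 = u 0 + a0 := by rw [ha0]; ring
  have hv1 : v 1 = u 1 + a1 := by rw [ha1]; ring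
  obtain ⟨p, hpdef⟩ : ∃ x : Pt,
      x = (WithLp.equiv 2 (Fin 2 → ℝ)).symm ![u 0 + (a0/2 - k*a1), u 1 + (a1/2 + k*a0)] := ⟨_, rfl⟩
  obtain ⟨q, hqdef⟩ : ∃ x : Pt,
      x = (WithLp.equiv 2 (Fin 2 → ℝ)).symm ![u 0 + (a0/2 + k*a1), u 1 + (a1/2 - k*a0)] := ⟨_, rfl⟩
  have hp0 : p 0 = u 0 + (a0/2 - k*a1) := by rw [hpdef]; rfl
  have hp1 : p 1 = u 1 + (a1/2 + k*a0) := by rw [hpdef]; rfl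
  have hq0 : q 0 = u 0 + (a0/2 + k*a1) := by rw [hqdef]; rfl
  have hq1 : q 1 = u 1 + (a1/2 - k*a0) := by rw [hqdef]; rfl
  have hpu : dist p u = r := by
    rw [dist_coord_eq _ _ hr.le, hp0, hp1]
    linear_combination (1/4 + k^2)*he2 + hek
  have hpv : dist p v = r := by
    rw [dist_coord_eq _ _ hr.le, hp0, hp1, hv0, hv1]
    linear_combination (1/4 + k^2)*he2 + hek
  have hqu : dist q u = r := by
    rw [dist_coord_eq _ _ hr.le, hq0, hq1]
    linear_combination (1/4 + k^2)*he2 + hek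
  have hqv : dist q v = r := by
    rw [dist_coord_eq _ _ hr.le, hq0, hq1, hv0, hv1]
    linear_combination (1/4 + k^2)*he2 + hek
  have hpu' : dist p u' ≤ r := mem_closedBall.1 (H ⟨mem_closedBall.2 (le_of_eq hpu), mem_sphere.2 hpv⟩).1
  have hqu' : dist q u' ≤ r := mem_closedBall.1 (H ⟨mem_closedBall.2 (le_of_eq hqu), mem_sphere.2 hqv⟩).1
  rw [dist_coord_le _ _ hr.le, hp0, hp1] at hpu'
  rw [dist_coord_le _ _ hr.le, hq0, hq1] at hqu'
  rintro z ⟨hz1, hz2⟩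
  refine ⟨mem_closedBall.2 ?_, hz2⟩
  have hzu : dist z u = r := mem_sphere.1 hz2
  have hzv : dist z v ≤ r := mem_closedBall.1 hz1
  rw [dist_coord_eq _ _ hr.le] at hzu
  rw [dist_coord_le _ _ hr.le, hv0, hv1] at hzv
  rw [dist_coord_le _ _ hr.le]
  have hcore := core' a0 a1 (u' 0 - u 0) (u' 1 - u 1) (z 0 - u 0) (z 1 - u 1) e k r
    he hk hek he2
    (by linarith [hpu', (by ring : (a0/2 - k*a1 - (u' 0 - u 0))^2 + (a1/2 + k*a0 - (u' 1 - u 1))^2 = (u 0 + (a0/2 - k*a1) - u' 0)^2 + (u 1 + (a1/2 + k*a0) - u' 1)^2)])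
    (by linarith [hqu', (by ring : (a0/2 + k*a1 - (u' 0 - u 0))^2 + (a1/2 - k*a0 - (u' 1 - u 1))^2 = (u 0 + (a0/2 + k*a1) - u' 0)^2 + (u 1 + (a1/2 - k*a0) - u' 1)^2)])
    hzu
    (by linarith [hzv, (by ring : (z 0 - u 0 - a0)^2 + (z 1 - u 1 - a1)^2 = (z 0 - (u 0 + a0))^2 + (z 1 - (u 1 + a1))^2)])
  linarith [hcore, (by ring : (z 0 - u 0 - (u' 0 - u 0))^2 + (z 1 - u 1 - (u' 1 - u 1))^2 = (z 0 - u' 0)^2 + (z 1 - u' 1)^2)]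

/-- Lemma: duality of the arc-containment relation. -/
theorem stmt_1 (r : ℝ) (hr : 0 < r) (v u u' : Pt)
    (hvu : v ≠ u) (hvu' : v ≠ u') (huu' : u ≠ u')
    (hcol : ¬ Collinear ℝ ({v, u, u'} : Set Pt))
    (h1 : dist v u ≤ r) (h2 : dist v u' ≤ r) (h3 : dist u u' ≤ r) :
    arcLe r v u u' ↔ arcLe r u v u' :=
  ⟨fun H => half r v u u' hvu h1 H,
   fun H => half r u v u' hvu.symm (by rw [dist_comm]; exact h1) H⟩
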